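/- Fix ε > 0 and an integer k ≥ max(2, 1/(4ε²)). Then (1 + x₂²)^k (x₁x₂ + ε(1 + x₁² + x₂²)²) can be written as σ + ψ·x₂³ where σ is a sum of squares of polynomials in (x₁,x₂) and ψ ∈ ℝ[x₁,x₂]. In particular, x₁x₂ + ε(1+x₁²+x₂²)² ∈ (Σ[x₁,x₂] + x₂³ℝ[x₁,x₂]) / (1+x₂²)^k. -/

import Mathlib

open MvPolynomial

lemma pow_one_add_sq_aux (k : ℕ) :
    ∃ Q : MvPolynomial (Fin 2) ℝ,
      (1 + X 1 ^ 2) ^ k = 1 + C (k : ℝ) * X 1 ^ 2 + X 1 ^ 4 * Q := by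
  induction k with
  | zero => exact ⟨0, by simp⟩
  | succ n ih =>
    obtain ⟨Q, hQ⟩ := ih
    refine ⟨Q + C (n : ℝ) + X 1 ^ 2 * Q, ?_⟩
    rw [pow_succ, hQ]
    push_cast [C_add, C_1]
    ring

theorem stmt_17 (ε : ℝ) (hε : 0 < ε) (k : ℕ) (hk2 : 2 ≤ k)
    (hkε : 1 / (4 * ε ^ 2) ≤ (k : ℝ)) :
    ∃ (σ ψ : MvPolynomial (Fin 2) ℝ), IsSumSq σ ∧
      (1 + X 1 ^ 2) ^ k * (X 0 * X 1 + C ε * (1 + X 0 ^ 2 + X 1 ^ 2) ^ 2)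
        = σ + ψ * X 1 ^ 3 := by
  obtain ⟨Q, hQ⟩ := pow_one_add_sq_aux k
  have hk0 : (0 : ℝ) < (k : ℝ) := by positivity
  set a : ℝ := Real.sqrt (ε * k) with ha_def
  have hεk : (0 : ℝ) < ε * k := by positivity
  have ha2 : a ^ 2 = ε * k := Real.sq_sqrt hεk.le
  have ha0 : 0 < a := Real.sqrt_pos.mpr hεk
  set c : ℝ := 1 / (2 * a) with hc_def
  have hac : 2 * a * c = 1 := by rw [hc_def]; field_simp [ha0.ne']
  have hc2 : c ^ 2 = 1 / (4 * (ε * k)) := by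
    rw [hc_def]; rw [div_pow, mul_pow, ← ha2]; ring_nf
  -- b ^ 2 = 2ε - c ^ 2, need nonneg
  have hble : c ^ 2 ≤ ε := by
    rw [hc2]
    rw [div_le_iff₀ (by positivity)]
    have h1 : 1 / (4 * ε ^ 2) * ε ≤ (k : ℝ) * ε := by
      exact mul_le_mul_of_nonneg_right hkε hε.le
    calc (1 : ℝ) = (1 / (4 * ε ^ 2) * ε) * (4 * ε) := by field_simp
      _ ≤ ((k : ℝ) * ε) * (4 * ε) := by
          exact mul_le_mul_of_nonneg_right h1 (by positivity)
      _ = ε * (4 * (ε * k)) := by ring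
  set b : ℝ := Real.sqrt (2 * ε - c ^ 2) with hb_def
  have hb2 : b ^ 2 = 2 * ε - c ^ 2 := Real.sq_sqrt (by linarith)
  set e : ℝ := Real.sqrt ε with he_def
  have he2 : e ^ 2 = ε := Real.sq_sqrt hε.le
  set f : ℝ := Real.sqrt (2 * ε) with hf_def
  have hf2 : f ^ 2 = 2 * ε := Real.sq_sqrt (by linarith)
  set g : ℝ := Real.sqrt (2 * (ε * k)) with hg_def
  have hg2 : g ^ 2 = 2 * (ε * k) := Real.sq_sqrt (by positivity)
  -- polynomial versions of the relations
  have R1 : (C a : MvPolynomial (Fin 2) ℝ) ^ 2 = C ε * C (k : ℝ) := by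
    rw [← C_pow, ha2, ← C_mul]
  have hC2 : (C (2 : ℝ) : MvPolynomial (Fin 2) ℝ) = 2 := by
    simpa using C_eq_coe_nat (σ := Fin 2) (R := ℝ) 2
  have R2 : (2 : MvPolynomial (Fin 2) ℝ) * C a * C c = 1 := by
    rw [← hC2, ← C_mul, ← C_mul, hac, C_1]
  have R3 : (C b : MvPolynomial (Fin 2) ℝ) ^ 2 = 2 * C ε - (C c) ^ 2 := by
    rw [← C_pow, hb2, ← C_pow, ← hC2, ← C_mul, ← C_sub]
  have R4 : (C e : MvPolynomial (Fin 2) ℝ) ^ 2 = C ε := by rw [← C_pow, he2]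
  have R5 : (C f : MvPolynomial (Fin 2) ℝ) ^ 2 = 2 * C ε := by
    rw [← C_pow, hf2, ← hC2, ← C_mul]
  have R6 : (C g : MvPolynomial (Fin 2) ℝ) ^ 2 = 2 * (C ε * C (k : ℝ)) := by
    rw [← C_pow, hg2, ← hC2, ← C_mul, ← C_mul]
  set x : MvPolynomial (Fin 2) ℝ := X 0
  set y : MvPolynomial (Fin 2) ℝ := X 1
  set p1 : MvPolynomial (Fin 2) ℝ := C a * y + C c * x
  set p2 : MvPolynomial (Fin 2) ℝ := C e
  set p3 : MvPolynomial (Fin 2) ℝ := C b * x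
  set p4 : MvPolynomial (Fin 2) ℝ := C e * x ^ 2
  set p5 : MvPolynomial (Fin 2) ℝ := C f * y
  set p6 : MvPolynomial (Fin 2) ℝ := C f * (x * y)
  set p7 : MvPolynomial (Fin 2) ℝ := C g * (x * y)
  set p8 : MvPolynomial (Fin 2) ℝ := C a * (x ^ 2 * y)
  refine ⟨p1 * p1 + (p2 * p2 + (p3 * p3 + (p4 * p4 + (p5 * p5 +
      (p6 * p6 + (p7 * p7 + (p8 * p8 + 0))))))),
    C ε * y + C (k : ℝ) * x + 2 * (C ε * C (k : ℝ)) * (1 + x ^ 2) * y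
      + C ε * C (k : ℝ) * y ^ 3
      + y * Q * (x * y + C ε * (1 + x ^ 2 + y ^ 2) ^ 2), ?_, ?_⟩
  · exact .sq_add _ (.sq_add _ (.sq_add _ (.sq_add _ (.sq_add _
      (.sq_add _ (.sq_add _ (.sq_add _ .zero)))))))
  · rw [hQ]
    linear_combination (-(y ^ 2) - x ^ 4 * y ^ 2) * R1 - (x * y) * R2 - x ^ 2 * R3
      - (1 + x ^ 4) * R4 + (-(y ^ 2) - x ^ 2 * y ^ 2) * R5 - (x ^ 2 * y ^ 2) * R6
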